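/- Let θ ≤ α ≤ β be infinite cardinals with 2^{<θ} = θ, and let λ be a cardinal with cf(2^θ) ≤ λ < 2^θ and θ < λ. Then there is no universal K_{α,β}-free graph of cardinality λ; that is, there is no K_{α,β}-free graph G of cardinality λ such that every K_{α,β}-free graph of cardinality λ embeds as an induced subgraph into G. -/

import Mathlib

universe u

open Cardinal

/-- `G` is `K_{α,β}`-free: there are no sets `S`, `T` of vertices with `|S| = α`,
`|T| = β` and every vertex of `S` adjacent to every vertex of `T`. -/
def KBipartiteFree (α β : Cardinal.{u}) {V : Type u} (G : SimpleGraph V) : Prop :=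
  ¬ ∃ S T : Set V, #S = α ∧ #T = β ∧ ∀ s ∈ S, ∀ t ∈ T, G.Adj s t

namespace Stmt13Aux

lemma mk_Iic_toType_lt (c : Cardinal.{u}) (hc : ℵ₀ ≤ c) (x : c.ord.ToType) :
    #(Set.Iic x) < c := by
  haveI := Cardinal.noMaxOrder hc
  obtain ⟨y, hy⟩ := exists_gt x
  exact (Cardinal.mk_le_mk_of_subset fun z hz => lt_of_le_of_lt hz hy).trans_lt
    (Cardinal.mk_Iio_ord_toType y)

/-- The nodes of the tree `2^{<θ}`. -/
def Node (θ : Cardinal.{u}) : Type u := Σ ξ : θ.ord.ToType, (Set.Iio ξ → Prop)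

/-- The restriction of a branch `f` to level `ξ`. -/
def res (θ : Cardinal.{u}) (f : θ.ord.ToType → Prop) (ξ : θ.ord.ToType) : Node θ :=
  ⟨ξ, fun y => f y.1⟩

/-- The set of restrictions of a branch. -/
def dset (θ : Cardinal.{u}) (f : θ.ord.ToType → Prop) : Set (Node θ) :=
  Set.range (res θ f)

lemma res_eq_res {θ : Cardinal.{u}} {f g : θ.ord.ToType → Prop} {ξ ξ' : θ.ord.ToType}
    (h : res θ f ξ = res θ g ξ') : ξ = ξ' ∧ ∀ y < ξ, f y = g y := by
  have h1 : ξ = ξ' := congrArg Sigma.fst h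
  subst h1
  refine ⟨rfl, fun y hy => ?_⟩
  have h2 : HEq (fun y : Set.Iio ξ => f y.1) (fun y : Set.Iio ξ => g y.1) :=
    (Sigma.mk.inj_iff.mp h).2
  exact congrFun (eq_of_heq h2) ⟨y, hy⟩

lemma dset_inj {θ : Cardinal.{u}} (hθ : ℵ₀ ≤ θ) {f g : θ.ord.ToType → Prop}
    (h : dset θ f = dset θ g) : f = g := by
  haveI := Cardinal.noMaxOrder hθ
  funext x
  obtain ⟨ξ, hξ⟩ := exists_gt x
  have hm : res θ f ξ ∈ dset θ g := h ▸ Set.mem_range_self ξ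
  obtain ⟨ξ', hξ'⟩ := hm
  obtain ⟨h1, h2⟩ := res_eq_res hξ'
  exact (h2 x (h1 ▸ hξ)).symm

lemma dset_inter_small {θ : Cardinal.{u}} (hθ : ℵ₀ ≤ θ) {f g : θ.ord.ToType → Prop}
    (hfg : f ≠ g) : #(↥(dset θ f ∩ dset θ g)) < θ := by
  have hne : {ξ : θ.ord.ToType | f ξ ≠ g ξ}.Nonempty := by
    by_contra h
    rw [Set.not_nonempty_iff_eq_empty] at h
    refine hfg (funext fun ξ => not_ne_iff.mp fun hx => ?_)
    have hmm : ξ ∈ {ξ : θ.ord.ToType | f ξ ≠ g ξ} := hx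
    rw [h] at hmm
    exact hmm
  set ξ₀ := (wellFounded_lt (α := θ.ord.ToType)).min _ hne with hξ₀
  have hmem : f ξ₀ ≠ g ξ₀ := (wellFounded_lt (α := θ.ord.ToType)).min_mem _ hne
  have hsub : dset θ f ∩ dset θ g ⊆ res θ f '' Set.Iic ξ₀ := by
    rintro n ⟨hf, hg⟩
    obtain ⟨ξ, rfl⟩ := hf
    obtain ⟨ξ', hξ'⟩ := hg
    obtain ⟨h1, h2⟩ := res_eq_res hξ'
    have hle : ξ ≤ ξ₀ := by
      by_contra hlt
      have hlt' : ξ₀ < ξ' := by rw [h1]; exact lt_of_not_ge hlt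
      exact hmem ((h2 ξ₀ hlt').symm)
    exact ⟨ξ, hle, rfl⟩
  calc #(↥(dset θ f ∩ dset θ g)) ≤ #(res θ f '' Set.Iic ξ₀) := Cardinal.mk_le_mk_of_subset hsub
    _ ≤ #(Set.Iic ξ₀) := Cardinal.mk_image_le
    _ < θ := mk_Iic_toType_lt θ hθ ξ₀

lemma mk_node_le {θ : Cardinal.{u}} (hθ : ℵ₀ ≤ θ) (hpow : (2 : Cardinal.{u}) ^< θ = θ) :
    #(Node θ) ≤ θ := by
  rw [Node, Cardinal.mk_sigma]
  calc (Cardinal.sum fun ξ : θ.ord.ToType => #(Set.Iio ξ → Prop))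
      ≤ Cardinal.sum fun _ : θ.ord.ToType => θ := by
        refine Cardinal.sum_le_sum _ _ fun ξ => ?_
        have h1 : #(Set.Iio ξ → Prop) = (2 : Cardinal.{u}) ^ #(Set.Iio ξ) :=
          Cardinal.mk_set
        have h2 := Cardinal.le_powerlt (b := θ) 2 (Cardinal.mk_Iio_ord_toType ξ)
        rw [hpow] at h2
        rw [h1]
        exact h2
    _ = #θ.ord.ToType * θ := Cardinal.sum_const' _ _
    _ = θ * θ := by rw [Cardinal.mk_ord_toType]
    _ = θ := Cardinal.mul_eq_self hθ

/-- The incidence relation between nodes and branches. -/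
def rel (θ : Cardinal.{u}) (A : Set (θ.ord.ToType → Prop)) (P : Type u)
    (x y : Node θ ⊕ (↥A ⊕ P)) : Prop :=
  ∃ (n : Node θ) (b : ↥A), x = Sum.inl n ∧ y = Sum.inr (Sum.inl b) ∧ n ∈ dset θ b.1

/-- The bipartite incidence graph of a family of branches, with padding `P`. -/
def Hgraph (θ : Cardinal.{u}) (A : Set (θ.ord.ToType → Prop)) (P : Type u) :
    SimpleGraph (Node θ ⊕ (↥A ⊕ P)) :=
  SimpleGraph.fromRel (rel θ A P)

lemma hgraph_adj_branch_node {θ : Cardinal.{u}} {A : Set (θ.ord.ToType → Prop)} {P : Type u}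
    (b : ↥A) (n : Node θ) :
    (Hgraph θ A P).Adj (Sum.inr (Sum.inl b)) (Sum.inl n) ↔ n ∈ dset θ b.1 := by
  rw [Hgraph, SimpleGraph.fromRel_adj]
  constructor
  · rintro ⟨hne, h | h⟩
    · obtain ⟨n', b', h1, -, -⟩ := h
      exact absurd h1 (by simp)
    · obtain ⟨n', b', h1, h2, h3⟩ := h
      obtain rfl : n = n' := by simpa using h1
      obtain rfl : b = b' := by simpa using h2
      exact h3
  · intro h
    exact ⟨by simp, Or.inr ⟨n, b, rfl, rfl, h⟩⟩

/-- Core of the freeness argument. -/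
lemma core {θ : Cardinal.{u}} (hθ : ℵ₀ ≤ θ) {A : Set (θ.ord.ToType → Prop)} {P : Type u}
    (S T : Set (Node θ ⊕ (↥A ⊕ P)))
    (hadj : ∀ s ∈ S, ∀ t ∈ T, (Hgraph θ A P).Adj s t)
    (n₀ : Node θ) (hn₀ : Sum.inl n₀ ∈ S) (hT2 : 1 < #T) : #S < θ := by
  -- every element of T is a branch
  have hTb : ∀ t ∈ T, ∃ b : ↥A, t = Sum.inr (Sum.inl b) := by
    intro t ht
    rcases (hadj _ hn₀ t ht).2 with ⟨n', b', h1, h2, -⟩ | ⟨n', b', h1, h2, -⟩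
    · exact ⟨b', h2⟩
    · exact absurd h2 (by simp)
  have hTnt : T.Nontrivial := Set.nontrivial_coe_sort.mp (Cardinal.one_lt_iff_nontrivial.mp hT2)
  obtain ⟨t₁, ht₁, t₂, ht₂, hne⟩ := hTnt
  obtain ⟨b₁, rfl⟩ := hTb t₁ ht₁
  obtain ⟨b₂, rfl⟩ := hTb t₂ ht₂
  have hb : (b₁ : θ.ord.ToType → Prop) ≠ (b₂ : θ.ord.ToType → Prop) := by
    intro h
    exact hne (by rw [Subtype.ext h])
  -- every element of S maps into the intersection
  have hSm : ∀ s ∈ S, ∃ m : Node θ, s = Sum.inl m ∧ m ∈ dset θ b₁.1 ∩ dset θ b₂.1 := by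
    intro s hs
    have h1 := hadj s hs _ ht₁
    have h2 := hadj s hs _ ht₂
    rcases h1.2 with ⟨n', b', hx, hy, hd⟩ | ⟨n', b', hx, hy, -⟩
    · rcases h2.2 with ⟨n'', b'', hx', hy', hd'⟩ | ⟨n'', b'', hx', hy', -⟩
      · have e1 : b₁ = b' := by simpa using hy
        have e2 : b₂ = b'' := by simpa using hy'
        have e3 : n' = n'' := Sum.inl_injective (hx.symm.trans hx')
        refine ⟨n', hx, ?_, ?_⟩
        · rw [e1]; exact hd
        · rw [e2, e3]; exact hd'
      · exact absurd hx' (by simp)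
    · exact absurd hx (by simp)
  choose m hm1 hm2 using fun s : ↥S => hSm s.1 s.2
  have hinj : Function.Injective fun s : ↥S => (⟨m s, hm2 s⟩ : ↥(dset θ b₁.1 ∩ dset θ b₂.1)) := by
    intro s s' h
    have : m s = m s' := congrArg Subtype.val h
    apply Subtype.ext
    rw [hm1 s, hm1 s', this]
  exact (Cardinal.mk_le_of_injective hinj).trans_lt (dset_inter_small hθ hb)

lemma hgraph_free {θ α β : Cardinal.{u}} (hθ : ℵ₀ ≤ θ) (hθα : θ ≤ α) (hθβ : θ ≤ β)
    (A : Set (θ.ord.ToType → Prop)) (P : Type u) :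
    KBipartiteFree α β (Hgraph θ A P) := by
  rintro ⟨S, T, hS, hT, hadj⟩
  have hα : ℵ₀ ≤ α := hθ.trans hθα
  have hβ : ℵ₀ ≤ β := hθ.trans hθβ
  have hS1 : 1 < #S := by rw [hS]; exact one_lt_aleph0.trans_le hα
  have hT1 : 1 < #T := by rw [hT]; exact one_lt_aleph0.trans_le hβ
  have hSne : S.Nonempty := by
    rw [← Set.nonempty_coe_sort, ← Cardinal.mk_ne_zero_iff]
    exact (zero_lt_one.trans hS1).ne'
  have hTne : T.Nonempty := by
    rw [← Set.nonempty_coe_sort, ← Cardinal.mk_ne_zero_iff]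
    exact (zero_lt_one.trans hT1).ne'
  obtain ⟨s₀, hs₀⟩ := hSne
  obtain ⟨t₀, ht₀⟩ := hTne
  rcases s₀ with n | b | p
  · -- s₀ is a node
    have := core hθ S T hadj n hs₀ hT1
    rw [hS] at this
    exact absurd hθα (not_le_of_gt this)
  · -- s₀ is a branch; find a node in T
    have hadj' : ∀ t ∈ T, ∀ s ∈ S, (Hgraph θ A P).Adj t s := fun t ht s hs => (hadj s hs t ht).symm
    have h := (hadj _ hs₀ t₀ ht₀).2
    rcases h with ⟨n', b', hx, hy, -⟩ | ⟨n', b', hx, hy, -⟩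
    · exact absurd hx (by simp)
    · -- t₀ = Sum.inl n'
      have := core hθ T S hadj' n' (hx ▸ ht₀) hS1
      rw [hT] at this
      exact absurd hθβ (not_le_of_gt this)
  · -- s₀ is padding: contradiction with adjacency to t₀
    have h := (hadj _ hs₀ t₀ ht₀).2
    rcases h with ⟨n', b', hx, hy, -⟩ | ⟨n', b', hx, hy, -⟩
    · exact absurd hx (by simp)
    · exact absurd hy (by simp)

end Stmt13Aux

open Stmt13Aux

/-- For infinite cardinals `θ ≤ α ≤ β` with `2^{<θ} = θ` and `λ` with
`cf(2^θ) ≤ λ < 2^θ` and `θ < λ`, there is no universal `K_{α,β}`-free graph of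
cardinality `λ`. -/
theorem stmt13 (θ α β lam : Cardinal.{u}) (hθ : ℵ₀ ≤ θ) (hθα : θ ≤ α) (hαβ : α ≤ β)
    (hpow : (2 : Cardinal.{u}) ^< θ = θ)
    (hcf : ((2 : Cardinal.{u}) ^ θ).ord.cof ≤ lam) (hlt : lam < 2 ^ θ) (hθlam : θ < lam) :
    ¬ ∃ (V : Type u) (G : SimpleGraph V), #V = lam ∧ KBipartiteFree α β G ∧
        ∀ (W : Type u) (H : SimpleGraph W), #W = lam → KBipartiteFree α β H →
          Nonempty (H ↪g G) := by
  rintro ⟨V, G, hV, -, huniv⟩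
  have hlam : ℵ₀ ≤ lam := hθ.trans hθlam.le
  have hκ : ℵ₀ ≤ (2 : Cardinal.{u}) ^ θ := hθ.trans (Cardinal.cantor θ).le
  haveI : Nonempty V := Cardinal.mk_ne_zero_iff.mp (by rw [hV]; exact (aleph0_pos.trans_le hlam).ne')
  -- trace sets
  set Cg : (Node θ → V) → Set (θ.ord.ToType → Prop) :=
    fun g => {f | ∃ w : V, ∀ n : Node θ, G.Adj w (g n) ↔ n ∈ dset θ f} with hCgdef
  have hCg_card : ∀ g, #(Cg g) ≤ lam := by
    intro g
    rw [← hV]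
    have hx : ∀ f : ↥(Cg g), ∃ w : V, ∀ n : Node θ, G.Adj w (g n) ↔ n ∈ dset θ f.1 :=
      fun f => f.2
    choose wfn hw using hx
    refine Cardinal.mk_le_of_injective (f := wfn) fun f₁ f₂ he => ?_
    apply Subtype.ext
    apply dset_inj hθ
    ext n
    rw [← hw f₁ n, he, hw f₂ n]
  -- there are at most 2^θ trace sets
  have hJ : #(Node θ → V) ≤ 2 ^ θ := by
    have h1 : #(Node θ → V) = lam ^ #(Node θ) := by
      rw [← Cardinal.power_def, hV]
    rw [h1]
    calc lam ^ #(Node θ) ≤ lam ^ θ :=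
          Cardinal.power_le_power_left (aleph0_pos.trans_le hlam).ne' (mk_node_le hθ hpow)
      _ ≤ ((2 : Cardinal.{u}) ^ θ) ^ θ := Cardinal.power_le_power_right hlt.le
      _ = (2 : Cardinal.{u}) ^ (θ * θ) := (Cardinal.power_mul).symm
      _ = (2 : Cardinal.{u}) ^ θ := by rw [Cardinal.mul_eq_self hθ]
  -- a surjection from 2^θ onto the index of traces
  obtain ⟨emb0⟩ : Nonempty ((Node θ → V) ↪ ((2 : Cardinal.{u}) ^ θ).ord.ToType) := by
    rw [← Cardinal.le_def, Cardinal.mk_ord_toType]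
    exact hJ
  haveI : Nonempty (Node θ → V) := ⟨fun _ => Classical.arbitrary V⟩
  set e := Function.invFun emb0 with he
  have hesurj : Function.Surjective e := Function.invFun_surjective emb0.injective
  set U : ((2 : Cardinal.{u}) ^ θ).ord.ToType → Set (θ.ord.ToType → Prop) :=
    fun x => ⋃ y ∈ Set.Iic x, Cg (e y) with hUdef
  have hU : ∀ x, #(U x) < 2 ^ θ := by
    intro x
    have h1 := Cardinal.mk_biUnion_le (fun y => Cg (e y)) (Set.Iic x)
    haveI : Nonempty ↥(Set.Iic x) := ⟨⟨x, le_refl x⟩⟩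
    have h2 : ⨆ y : ↥(Set.Iic x), #(Cg (e y.1)) ≤ lam := ciSup_le' fun y => hCg_card _
    calc #(U x) ≤ #(Set.Iic x) * ⨆ y : ↥(Set.Iic x), #(Cg (e y.1)) := h1
      _ ≤ #(Set.Iic x) * lam := mul_le_mul_right h2 _
      _ < 2 ^ θ := Cardinal.mul_lt_of_lt hκ (mk_Iic_toType_lt _ hκ x) hlt
  have hbig : #(θ.ord.ToType → Prop) = (2 : Cardinal.{u}) ^ θ := by
    have h0 : #(θ.ord.ToType → Prop) = #(Set θ.ord.ToType) := rfl
    rw [h0, Cardinal.mk_set, Cardinal.mk_ord_toType]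
  have hpick : ∀ x, ∃ f : θ.ord.ToType → Prop, f ∉ U x := by
    intro x
    by_contra h
    push_neg at h
    have huniv' : U x = Set.univ := Set.eq_univ_of_forall h
    have h2 := hU x
    rw [huniv', Cardinal.mk_univ, hbig] at h2
    exact lt_irrefl _ h2
  choose a ha using hpick
  haveI hwo : IsWellOrder ((2 : Cardinal.{u}) ^ θ).ord.ToType (· < ·) := isWellOrder_lt
  obtain ⟨S₀, hS₀unb, hS₀card⟩ :=
    Order.exists_cof_eq ((2 : Cardinal.{u}) ^ θ).ord.ToType
  rw [Ordinal.cof_toType] at hS₀card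
  set A := a '' S₀ with hA
  have hAcard : #A ≤ lam := Cardinal.mk_image_le.trans ((le_of_eq hS₀card).trans hcf)
  have hkey : ∀ g : Node θ → V, ¬ A ⊆ Cg g := by
    intro g hsub
    obtain ⟨y, rfl⟩ := hesurj g
    obtain ⟨x, hxS, hxy⟩ := hS₀unb y
    have h1 : a x ∈ Cg (e y) := hsub (Set.mem_image_of_mem a hxS)
    have h2 : a x ∈ U x := Set.mem_biUnion hxy h1
    exact ha x h2
  -- build the test graph
  have hWcard : #(Node θ ⊕ (↥A ⊕ lam.out)) = lam := by
    have h0 : #(Node θ ⊕ (↥A ⊕ lam.out)) = #(Node θ) + (#↥A + #lam.out) := by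
      simp [Cardinal.mk_sum, Cardinal.lift_id]
    rw [h0, Cardinal.mk_out, Cardinal.add_eq_right hlam hAcard]
    exact Cardinal.add_eq_right hlam ((mk_node_le hθ hpow).trans hθlam.le)
  obtain ⟨embH⟩ :=
    huniv _ (Hgraph θ A lam.out) hWcard (hgraph_free hθ hθα (hθα.trans hαβ) A lam.out)
  apply hkey fun n => embH (Sum.inl n)
  intro f hf
  refine ⟨embH (Sum.inr (Sum.inl ⟨f, hf⟩)), fun n => ?_⟩
  exact (embH.map_adj_iff).trans (hgraph_adj_branch_node ⟨f, hf⟩ n)
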